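/- Let H be a complex Hilbert space, ψ ∈ H a unit vector, δ ≥ 0, and let Z_A, Z_B, X_C, Z_C be binary observables on H such that Z_A commutes with Z_B, X_C, Z_C, Z_B commutes with X_C and Z_C, and X_C commutes with Z_A and Z_B. Write P_Q^0 = P⁰(Z_Q), P_Q^1 = P¹(Z_Q), and set ε₁ = Re⟨ψ, P_A^0 P_B^0 P_C^1 ψ⟩ − 1/3. If ‖P_A^0 (X_C Z_C + Z_C X_C) ψ‖ ≤ δ, then |3·‖P_A^0 P_B^0 P_C^0 X_C ψ‖² − 1 − 3ε₁| ≤ (3/2)·δ. -/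

import Mathlib

open scoped ComplexInnerProductSpace

/-- A binary observable: a self-adjoint continuous linear map squaring to the identity. -/
structure IsBinaryObservable {H : Type*} [NormedAddCommGroup H] [InnerProductSpace ℂ H]
    [CompleteSpace H] (A : H →L[ℂ] H) : Prop where
  selfAdjoint : IsSelfAdjoint A
  mul_self_eq_one : A ∘L A = 1

/-- Projection onto the `+1` eigenspace of a binary observable. -/
noncomputable def projP0 {H : Type*} [NormedAddCommGroup H] [InnerProductSpace ℂ H]
    (Z : H →L[ℂ] H) : H →L[ℂ] H := (2 : ℂ)⁻¹ • (1 + Z)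

/-- Projection onto the `−1` eigenspace of a binary observable. -/
noncomputable def projP1 {H : Type*} [NormedAddCommGroup H] [InnerProductSpace ℂ H]
    (Z : H →L[ℂ] H) : H →L[ℂ] H := (2 : ℂ)⁻¹ • (1 - Z)

section Helpers
open ContinuousLinearMap
variable {H : Type*} [NormedAddCommGroup H] [InnerProductSpace ℂ H] [CompleteSpace H]

lemma sa_inner {A : H →L[ℂ] H} (hA : IsSelfAdjoint A) (x y : H) :
    ⟪A x, y⟫ = ⟪x, A y⟫ := by
  conv_lhs => rw [← hA.adjoint_eq]
  exact adjoint_inner_left A y x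

lemma re_inner_self (x : H) : (⟪x, x⟫).re = ‖x‖^2 := by
  simpa using inner_self_eq_norm_sq (𝕜 := ℂ) x

lemma norm_sq_proj {P : H →L[ℂ] H} (hP : IsSelfAdjoint P) (hP2 : P * P = P) (v : H) :
    ‖P v‖ ^ 2 = (⟪v, P v⟫).re := by
  have happ : P (P v) = P v := by
    have := congrArg (fun T : H →L[ℂ] H => T v) hP2
    simpa [ContinuousLinearMap.mul_apply] using this
  rw [← re_inner_self (P v), sa_inner hP, happ]

lemma norm_proj_le {P : H →L[ℂ] H} (hP : IsSelfAdjoint P) (hP2 : P * P = P) (v : H) :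
    ‖P v‖ ≤ ‖v‖ := by
  have h1 := norm_sq_proj hP hP2 v
  have h2 : (⟪v, P v⟫).re ≤ ‖v‖ * ‖P v‖ := by
    calc (⟪v, P v⟫).re ≤ ‖(⟪v, P v⟫ : ℂ)‖ := Complex.re_le_norm _
    _ = ‖(⟪v, P v⟫ : ℂ)‖ := rfl
    _ ≤ ‖v‖ * ‖P v‖ := norm_inner_le_norm v (P v)
  nlinarith [norm_nonneg (P v), norm_nonneg v]

lemma norm_binary {X : H →L[ℂ] H} (hX : IsSelfAdjoint X) (hX2 : X * X = 1) (v : H) :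
    ‖X v‖ = ‖v‖ := by
  have happ : X (X v) = v := by
    have := congrArg (fun T : H →L[ℂ] H => T v) hX2
    simpa [ContinuousLinearMap.mul_apply] using this
  have h2 : ‖X v‖^2 = ‖v‖^2 := by
    rw [← re_inner_self (X v), sa_inner hX, happ, re_inner_self]
  rw [← Real.sqrt_sq (norm_nonneg (X v)), h2, Real.sqrt_sq (norm_nonneg v)]

lemma comm_proj0_left {A B : H →L[ℂ] H} (h : Commute A B) : Commute (projP0 A) B :=
  ((Commute.one_left B).add_left h).smul_left _

lemma comm_proj0_right {A B : H →L[ℂ] H} (h : Commute A B) : Commute A (projP0 B) :=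
  ((Commute.one_right A).add_right h).smul_right _

lemma comm_proj1_right {A B : H →L[ℂ] H} (h : Commute A B) : Commute A (projP1 B) :=
  ((Commute.one_right A).sub_right h).smul_right _

lemma proj0_sa {Z : H →L[ℂ] H} (hZ : IsSelfAdjoint Z) : IsSelfAdjoint (projP0 Z) := by
  unfold projP0 IsSelfAdjoint
  rw [star_smul, star_add, star_one, hZ.star_eq]
  norm_num

lemma proj0_idem {Z : H →L[ℂ] H} (hZ : Z * Z = 1) : projP0 Z * projP0 Z = projP0 Z := by
  unfold projP0
  rw [smul_mul_smul_comm, mul_add, add_mul, add_mul, hZ]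
  simp only [one_mul, mul_one]
  match_scalars <;> norm_num

lemma idem_mul {M : Type*} [Ring M] {a b : M} (h : Commute a b) (ha : a*a = a)
    (hb : b*b = b) : (a*b)*(a*b) = a*b := by
  calc (a*b)*(a*b) = a*(b*a)*b := by noncomm_ring
  _ = a*(a*b)*b := by rw [h.eq]
  _ = (a*a)*(b*b) := by noncomm_ring
  _ = a*b := by rw [ha, hb]

end Helpers

open ContinuousLinearMap in
theorem stmt17 {H : Type*} [NormedAddCommGroup H] [InnerProductSpace ℂ H] [CompleteSpace H]
    (ψ : H) (hψ : ‖ψ‖ = 1) (δ : ℝ) (hδ : 0 ≤ δ)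
    (ZA ZB XC ZC : H →L[ℂ] H)
    (hZA : IsBinaryObservable ZA) (hZB : IsBinaryObservable ZB)
    (hXC : IsBinaryObservable XC) (hZC : IsBinaryObservable ZC)
    (hA1 : Commute ZA ZB) (hA2 : Commute ZA XC) (hA3 : Commute ZA ZC)
    (hB1 : Commute ZB XC) (hB2 : Commute ZB ZC)
    (ε₁ : ℝ)
    (hε₁ : ε₁ = (⟪ψ, projP0 ZA (projP0 ZB (projP1 ZC ψ))⟫).re - 1/3)
    (h : ‖projP0 ZA ((XC * ZC + ZC * XC) ψ)‖ ≤ δ) :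
    |3 * ‖projP0 ZA (projP0 ZB (projP0 ZC (XC ψ)))‖ ^ 2 - 1 - 3 * ε₁| ≤ (3/2) * δ := by
  have hXX : XC * XC = 1 := hXC.mul_self_eq_one
  set PA := projP0 ZA with hPAdef
  set PB := projP0 ZB with hPBdef
  set PC0 := projP0 ZC with hPC0def
  set PC1 := projP1 ZC with hPC1def
  set S := XC * ZC + ZC * XC with hSdef
  -- commuting facts
  have cAB : Commute PA PB := comm_proj0_right (comm_proj0_left hA1)
  have cAX : Commute PA XC := comm_proj0_left hA2
  have cBX : Commute PB XC := comm_proj0_left hB1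
  have cAC0 : Commute PA PC0 := comm_proj0_right (comm_proj0_left hA3)
  have cBC0 : Commute PB PC0 := comm_proj0_right (comm_proj0_left hB2)
  have cAS : Commute PA S :=
    comm_proj0_left ((hA2.mul_right hA3).add_right (hA3.mul_right hA2))
  have cSX : Commute S XC := by
    show S * XC = XC * S
    rw [hSdef, add_mul, mul_add, mul_assoc ZC XC XC, hXX, mul_one,
      ← mul_assoc XC XC ZC, hXX, one_mul, ← mul_assoc XC ZC XC]
    exact add_comm _ _
  -- self-adjointness and idempotence
  have sPA : IsSelfAdjoint PA := proj0_sa hZA.selfAdjoint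
  have sPB : IsSelfAdjoint PB := proj0_sa hZB.selfAdjoint
  have sPC0 : IsSelfAdjoint PC0 := proj0_sa hZC.selfAdjoint
  have sXC : IsSelfAdjoint XC := hXC.selfAdjoint
  have iPA : PA * PA = PA := proj0_idem hZA.mul_self_eq_one
  have iPB : PB * PB = PB := proj0_idem hZB.mul_self_eq_one
  have iPC0 : PC0 * PC0 = PC0 := proj0_idem hZC.mul_self_eq_one
  have iAB : (PA*PB)*(PA*PB) = PA*PB := idem_mul cAB iPA iPB
  set Q := (PA * PB) * PC0 with hQdef
  have iQ : Q * Q = Q := idem_mul (cAC0.mul_left cBC0) iAB iPC0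
  have sQ : IsSelfAdjoint Q := by
    unfold Q
    show star _ = _
    rw [star_mul, star_mul, sPA.star_eq, sPB.star_eq, sPC0.star_eq]
    rw [← cAB.eq, ← (cAC0.mul_left cBC0).eq]
  -- step 1 : XC * PC0 * XC = PC1 + 2⁻¹ • (S * XC)
  have step1 : XC * PC0 * XC = PC1 + (2:ℂ)⁻¹ • (S * XC) := by
    rw [hPC0def, hPC1def, hSdef]
    unfold projP0 projP1
    rw [mul_smul_comm, smul_mul_assoc]
    rw [mul_add, mul_one, add_mul, hXX]
    rw [add_mul, mul_assoc ZC XC XC, hXX, mul_one]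
    match_scalars <;> norm_num
  -- key operator identity
  have key : XC * Q * XC = (PA*PB)*PC1 + (2:ℂ)⁻¹ • ((PB*XC)*(PA*S)) := by
    have cXAB : Commute XC (PA*PB) := (cAX.symm).mul_right (cBX.symm)
    have e1 : XC * Q * XC = (PA*PB) * (XC*PC0*XC) := by
      calc XC * Q * XC = (XC*(PA*PB)) * (PC0 * XC) := by rw [hQdef]; noncomm_ring
      _ = ((PA*PB)*XC) * (PC0 * XC) := by rw [cXAB.eq]
      _ = (PA*PB) * (XC*PC0*XC) := by noncomm_ring
    have e3 : (PA*PB)*(S*XC) = (PB*XC)*(PA*S) := by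
      calc (PA*PB)*(S*XC) = (PB*PA)*(S*XC) := by rw [cAB.eq]
      _ = PB*((PA*S)*XC) := by noncomm_ring
      _ = PB*(XC*(PA*S)) := by rw [(cAX.mul_left cSX).eq]
      _ = (PB*XC)*(PA*S) := by noncomm_ring
    rw [e1, step1, mul_add, mul_smul_comm, e3]
  -- scalar computation
  have hNorm : PA (PB (PC0 (XC ψ))) = Q (XC ψ) := by
    simp [hQdef, ContinuousLinearMap.mul_apply]
  have hNsq : ‖Q (XC ψ)‖^2 = (⟪ψ, (XC * Q * XC) ψ⟫).re := by
    have e : (⟪XC ψ, Q (XC ψ)⟫ : ℂ) = ⟪ψ, (XC * Q * XC) ψ⟫ := by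
      rw [sa_inner sXC]
      congr 1
    rw [norm_sq_proj sQ iQ, e]
  set t : ℝ := (⟪ψ, ((PB*XC)*(PA*S)) ψ⟫).re with htdef
  have hre : (⟪ψ, (XC * Q * XC) ψ⟫).re = (ε₁ + 1/3) + 2⁻¹ * t := by
    rw [key]
    have e0 : (((PA*PB)*PC1 + (2:ℂ)⁻¹ • ((PB*XC)*(PA*S))) ψ)
        = ((PA*PB)*PC1) ψ + (2:ℂ)⁻¹ • (((PB*XC)*(PA*S)) ψ) := by
      simp only [ContinuousLinearMap.add_apply, ContinuousLinearMap.coe_smul',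
        Pi.smul_apply]
    rw [e0, inner_add_right, inner_smul_right, Complex.add_re]
    have h1 : (⟪ψ, ((PA*PB)*PC1) ψ⟫).re = ε₁ + 1/3 := by
      rw [hε₁]
      have e1 : ((PA*PB)*PC1) ψ = PA (PB (PC1 ψ)) := by
        simp [ContinuousLinearMap.mul_apply]
      rw [e1]; ring
    have h2 : ((2:ℂ)⁻¹ * ⟪ψ, ((PB*XC)*(PA*S)) ψ⟫).re = 2⁻¹ * t := by
      have e2 : ((2:ℂ)⁻¹ : ℂ) = ((2⁻¹ : ℝ) : ℂ) := by norm_num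
      rw [e2, Complex.re_ofReal_mul, htdef]
    rw [h1, h2]
  -- bound |t| ≤ δ
  have ht : |t| ≤ δ := by
    have hmove : ⟪ψ, ((PB*XC)*(PA*S)) ψ⟫ = ⟪XC (PB ψ), PA (S ψ)⟫ := by
      have e : ((PB*XC)*(PA*S)) ψ = PB (XC (PA (S ψ))) := by
        simp [ContinuousLinearMap.mul_apply]
      rw [e, ← sa_inner sPB, ← sa_inner sXC]
    have hb1 : ‖XC (PB ψ)‖ ≤ 1 := by
      rw [norm_binary sXC hXX]
      calc ‖PB ψ‖ ≤ ‖ψ‖ := norm_proj_le sPB iPB ψ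
      _ = 1 := hψ
    have hb2 : ‖PA (S ψ)‖ ≤ δ := h
    calc |t| ≤ ‖(⟪ψ, ((PB*XC)*(PA*S)) ψ⟫ : ℂ)‖ := by
          rw [htdef]
          exact Complex.abs_re_le_norm _
    _ ≤ δ := by
          rw [hmove]
          calc ‖(⟪XC (PB ψ), PA (S ψ)⟫ : ℂ)‖ ≤ ‖XC (PB ψ)‖ * ‖PA (S ψ)‖ :=
            norm_inner_le_norm _ _
          _ ≤ 1 * δ := mul_le_mul hb1 hb2 (norm_nonneg _) (by norm_num)
          _ = δ := one_mul δ
  -- final arithmetic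
  rw [hNorm, hNsq, hre]
  have : 3 * ((ε₁ + 1/3) + 2⁻¹ * t) - 1 - 3 * ε₁ = (3/2) * t := by ring
  rw [this, abs_mul, abs_of_nonneg (by norm_num : (0:ℝ) ≤ 3/2)]
  exact mul_le_mul_of_nonneg_left ht (by norm_num)
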